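/- There is no continuity bound of the form D̂(ρ‖σ) ≤ f(ε,d) with f(ε,d) → 0 as ε → 0 for each fixed d, valid for all states ρ, σ with (1/2)‖ρ−σ‖₁ ≤ ε and ρ ≤ 2^d σ. Concretely, for qubit states ρ = |0⟩⟨0| and σ_ε = (9/10)|ψ_ε⟩⟨ψ_ε| + (1/10)|0⟩⟨0| with |ψ_ε⟩ = √(1−ε)|0⟩ + √ε|1⟩, one has (1/2)‖ρ−σ_ε‖₁ ≤ √ε and ρ ≤ 10 σ_ε, yet D̂(ρ‖σ_ε) = log 10 for all ε ∈ (0,1). -/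

import Mathlib

open Matrix
open scoped Kronecker ComplexOrder
attribute [local instance] Classical.propDecidable

noncomputable section

variable {d dA dB : Type*} [Fintype d] [DecidableEq d]
  [Fintype dA] [DecidableEq dA] [Fintype dB] [DecidableEq dB]

def cfcM (f : ℝ → ℝ) (A : Matrix d d ℂ) : Matrix d d ℂ :=
  if h : A.IsHermitian then h.cfc f else 0

def mpow (A : Matrix d d ℂ) (α : ℝ) : Matrix d d ℂ := cfcM (fun x => x ^ α) A

def trR (A : Matrix d d ℂ) : ℝ := (A.trace).re

def MLE (A B : Matrix d d ℂ) : Prop := (B - A).PosSemidef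

def suppLE (P Q : Matrix d d ℂ) : Prop := ∀ v, Q.mulVec v = 0 → P.mulVec v = 0

def IsState (ρ : Matrix d d ℂ) : Prop := ρ.PosSemidef ∧ trR ρ = 1

def SubState (ρ : Matrix d d ℂ) : Prop := ρ.PosSemidef ∧ trR ρ ≤ 1

def relEnt (P Q : Matrix d d ℂ) : EReal :=
  if suppLE P Q then
    ((trR (P * (cfcM (Real.logb 2) P - cfcM (Real.logb 2) Q)) / trR P : ℝ) : EReal)
  else ⊤

def sandD (α : ℝ) (P Q : Matrix d d ℂ) : EReal :=
  if α = 1 then relEnt P Q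
  else if (α < 1 ∧ P * Q ≠ 0) ∨ suppLE P Q then
    (((α - 1)⁻¹ * Real.logb 2
      (trR (mpow (mpow Q (-(α-1)/(2*α)) * P * mpow Q (-(α-1)/(2*α))) α) / trR P) : ℝ) : EReal)
  else ⊤

def Dmax (P Q : Matrix d d ℂ) : EReal :=
  sInf {x : EReal | ∃ l : ℝ, x = (l : EReal) ∧ MLE P ((2:ℝ) ^ l • Q)}

def traceNorm (X : Matrix d d ℂ) : ℝ := trR (cfcM Real.sqrt (Xᴴ * X))

def genFid (ρ σ : Matrix d d ℂ) : ℝ :=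
  (traceNorm (mpow ρ (1/2) * mpow σ (1/2)) + Real.sqrt ((1 - trR ρ) * (1 - trR σ)))^2

def purDist (ρ σ : Matrix d d ℂ) : ℝ := Real.sqrt (1 - genFid ρ σ)

def pBall (ε : ℝ) (ρ : Matrix d d ℂ) : Set (Matrix d d ℂ) :=
  {τ | τ.PosSemidef ∧ trR τ ≤ 1 ∧ purDist ρ τ ≤ ε}

def sDmax (ε : ℝ) (ρ η : Matrix d d ℂ) : EReal :=
  sInf {x : EReal | ∃ τ ∈ pBall ε ρ, x = Dmax τ η}

/-- Sandwiched α-Rényi conditional entropy `H̃↑_α(A|B)` (supremum over σ_B). -/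
def condSandUp (α : ℝ) (ρ : Matrix (dA × dB) (dA × dB) ℂ) : EReal :=
  sSup {x : EReal | ∃ σ : Matrix dB dB ℂ, IsState σ ∧
    x = - sandD α ρ ((1 : Matrix dA dA ℂ) ⊗ₖ σ)}

/-- Partial trace over the A system. -/
def ptrA (ρ : Matrix (dA × dB) (dA × dB) ℂ) : Matrix dB dB ℂ :=
  Matrix.of fun b b' => ∑ a : dA, ρ (a, b) (a, b')

/-- Partial trace over the B system. -/
def ptrB (ρ : Matrix (dA × dB) (dA × dB) ℂ) : Matrix dA dA ℂ :=
  Matrix.of fun a a' => ∑ b : dB, ρ (a, b) (a', b)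

/-- Sandwiched α-Rényi conditional entropy `H̃↓_α(A|B)`. -/
def condSandDown (α : ℝ) (ρ : Matrix (dA × dB) (dA × dB) ℂ) : EReal :=
  - sandD α ρ ((1 : Matrix dA dA ℂ) ⊗ₖ ptrA ρ)

/-- ε-smooth sandwiched α-Rényi conditional entropy. -/
def condSandUpSm (α ε : ℝ) (ρ : Matrix (dA × dB) (dA × dB) ℂ) : EReal :=
  sSup {x : EReal | ∃ τ ∈ pBall ε ρ, x = condSandUp α τ}

/-- Min-entropy `H_min(A|B)`. -/
def Hmin (ρ : Matrix (dA × dB) (dA × dB) ℂ) : EReal :=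
  sSup {x : EReal | ∃ l : ℝ, x = (l : EReal) ∧ ∃ σ : Matrix dB dB ℂ, IsState σ ∧
    MLE ρ ((2:ℝ) ^ (-l) • ((1 : Matrix dA dA ℂ) ⊗ₖ σ))}

/-- Smooth min-entropy `H^ε_min(A|B)`. -/
def HminSm (ε : ℝ) (ρ : Matrix (dA × dB) (dA × dB) ℂ) : EReal :=
  sSup {x : EReal | ∃ τ ∈ pBall ε ρ, x = Hmin τ}

/-- von Neumann entropy (base 2). -/
def vN (ρ : Matrix d d ℂ) : ℝ := - trR (cfcM (fun x => x * Real.logb 2 x) ρ)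

/-- von Neumann conditional entropy `H(A|B)`. -/
def vNCond (ρ : Matrix (dA × dB) (dA × dB) ℂ) : ℝ := vN ρ - vN (ptrA ρ)

def g0 (x : ℝ) : ℝ := - Real.logb 2 (1 - Real.sqrt (1 - x^2))

def g1 (x y : ℝ) : ℝ := g0 x - Real.logb 2 (1 - y^2)


/-- Geometric (Belavkin-Staszewski) relative entropy (base 2), for invertible σ. -/
def geomRel (ρ σ : Matrix d d ℂ) : ℝ :=
  trR (ρ * cfcM (Real.logb 2) (mpow ρ (1/2) * σ⁻¹ * mpow ρ (1/2)))


/-! ### Auxiliary lemmas -/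

section Aux

lemma diag_herm (v : d → ℝ) : (Matrix.diagonal ((↑) ∘ v) : Matrix d d ℂ).IsHermitian := by
  rw [Matrix.IsHermitian, Matrix.diagonal_conjTranspose]
  congr 1
  ext i
  simp [Pi.star_def, Function.comp_def]

lemma mem_spec (v : d → ℝ) (i : d) :
    v i ∈ spectrum ℝ (Matrix.diagonal ((↑) ∘ v) : Matrix d d ℂ) := by
  rw [← spectrum.algebraMap_mem_iff ℂ, spectrum_diagonal]
  exact ⟨i, by simp [RCLike.algebraMap_eq_ofReal]⟩

noncomputable def diagHom (v : d → ℝ) :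
    C(spectrum ℝ (Matrix.diagonal ((↑) ∘ v) : Matrix d d ℂ), ℝ) →⋆ₐ[ℝ] Matrix d d ℂ where
  toFun g := Matrix.diagonal (Complex.ofReal ∘ g ∘ fun i => ⟨v i, mem_spec v i⟩)
  map_one' := by
    rw [← Matrix.diagonal_one]; congr 1
  map_mul' f g := by simp [← Matrix.diagonal_mul_diagonal, Function.comp_def]
  map_zero' := by rw [← Matrix.diagonal_zero]; congr 1
  map_add' f g := by simp [← Matrix.diagonal_add, Function.comp_def]
  commutes' r := by
    rw [Matrix.algebraMap_eq_diagonal]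
    congr 1
  map_star' f := by
    simp [star_eq_conjTranspose, Matrix.diagonal_conjTranspose, Pi.star_def, Function.comp_def]

lemma diagHom_continuous (v : d → ℝ) : Continuous (diagHom v) := by
  have h0 : FiniteDimensional ℝ
      C(spectrum ℝ (Matrix.diagonal ((↑) ∘ v) : Matrix d d ℂ), ℝ) :=
    FiniteDimensional.of_injective (ContinuousMap.coeFnLinearMap ℝ (M := ℝ))
      DFunLike.coe_injective
  exact LinearMap.continuous_of_finiteDimensional ((diagHom v).toLinearMap : _ →ₗ[ℝ] _)

lemma diagHom_id (v : d → ℝ) :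
    diagHom v (ContinuousMap.restrict (spectrum ℝ (Matrix.diagonal ((↑) ∘ v) : Matrix d d ℂ))
      (ContinuousMap.id ℝ)) = Matrix.diagonal ((↑) ∘ v) := rfl

lemma cfc_diagonal (v : d → ℝ) (f : ℝ → ℝ) :
    cfc f (Matrix.diagonal ((↑) ∘ v) : Matrix d d ℂ) = Matrix.diagonal ((↑) ∘ f ∘ v) := by
  have hsa : IsSelfAdjoint (Matrix.diagonal ((↑) ∘ v) : Matrix d d ℂ) := diag_herm v
  have hhom := cfcHom_eq_of_continuous_of_map_id hsa (diagHom v) (diagHom_continuous v)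
    (diagHom_id v)
  rw [cfc_apply f _ hsa (by rw [continuousOn_iff_continuous_restrict]; fun_prop), hhom]
  rfl

lemma cfcM_diagonal (v : d → ℝ) (f : ℝ → ℝ) :
    cfcM f (Matrix.diagonal ((↑) ∘ v) : Matrix d d ℂ) = Matrix.diagonal ((↑) ∘ f ∘ v) := by
  rw [cfcM, dif_pos (diag_herm v), ← Matrix.IsHermitian.cfc_eq, cfc_diagonal]

lemma trR_diagonal (v : d → ℝ) : trR (Matrix.diagonal ((↑) ∘ v) : Matrix d d ℂ) = ∑ i, v i := by
  simp [trR, Matrix.trace_diagonal, Complex.re_sum]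

lemma posSemidef_vecMulVec_star (u : d → ℂ) :
    (Matrix.vecMulVec u (star u)).PosSemidef := by
  rw [Matrix.vecMulVec_eq (ι := Unit), show Matrix.replicateRow Unit (star u) = (Matrix.replicateCol Unit u)ᴴ by
    ext i j; simp [Matrix.replicateRow, Matrix.replicateCol]]
  exact Matrix.posSemidef_self_mul_conjTranspose _

def eV : Fin 2 → ℂ := ![1, 0]
def psiV (ε : ℝ) : Fin 2 → ℂ := ![(Real.sqrt (1 - ε) : ℂ), (Real.sqrt ε : ℂ)]
def rhoM : Matrix (Fin 2) (Fin 2) ℂ := vecMulVec eV (star eV)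
def sigM (ε : ℝ) : Matrix (Fin 2) (Fin 2) ℂ :=
  (9/10 : ℝ) • vecMulVec (psiV ε) (star (psiV ε)) + (1/10 : ℝ) • rhoM

lemma rho_diag : rhoM = Matrix.diagonal (Complex.ofReal ∘ ![(1:ℝ), 0]) := by
  ext i j
  fin_cases i <;> fin_cases j <;>
    simp [rhoM, eV, Matrix.vecMulVec_apply, -Matrix.cons_vecMulVec, Matrix.diagonal]

lemma ten_smul (ε : ℝ) :
    (10 : ℝ) • sigM ε - rhoM =
      vecMulVec ![((3 * Real.sqrt (1 - ε) : ℝ) : ℂ), ((3 * Real.sqrt ε : ℝ) : ℂ)]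
        (star ![((3 * Real.sqrt (1 - ε) : ℝ) : ℂ), ((3 * Real.sqrt ε : ℝ) : ℂ)]) := by
  ext i j
  fin_cases i <;> fin_cases j <;>
    simp [sigM, rhoM, psiV, eV, Matrix.vecMulVec_apply, -Matrix.cons_vecMulVec, Matrix.add_apply, Matrix.smul_apply,
      Matrix.sub_apply, Complex.real_smul, Complex.conj_ofReal] <;> push_cast <;> ring

lemma sqc (ε : ℝ) (h0 : 0 ≤ ε) : (Real.sqrt ε : ℂ) * (Real.sqrt ε : ℂ) = (ε : ℂ) := by
  rw [← Complex.ofReal_mul, Real.mul_self_sqrt h0]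

lemma Xfact (ε : ℝ) (h0 : 0 ≤ ε) (h1 : ε ≤ 1) :
    rhoM - sigM ε = (9/10 : ℝ) •
      !![(ε : ℂ), -((Real.sqrt (1-ε) : ℂ) * (Real.sqrt ε : ℂ));
         -((Real.sqrt (1-ε) : ℂ) * (Real.sqrt ε : ℂ)), -(ε : ℂ)] := by
  have ht' := sqc (1 - ε) (by linarith)
  have hs' := sqc ε h0
  ext i j
  fin_cases i <;> fin_cases j <;>
    simp [sigM, rhoM, psiV, eV, Matrix.vecMulVec_apply, -Matrix.cons_vecMulVec, Matrix.add_apply, Matrix.smul_apply,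
        Matrix.sub_apply, Complex.real_smul, Complex.conj_ofReal] <;>
    first
      | linear_combination (norm := (push_cast; ring1)) (-(9/10) : ℂ) * ht'
      | linear_combination (norm := (push_cast; ring1)) (-(9/10) : ℂ) * hs'
      | linear_combination (norm := (push_cast; ring1)) ((9/10) : ℂ) * ht'
      | linear_combination (norm := (push_cast; ring1)) ((9/10) : ℂ) * hs'
      | linear_combination (norm := (push_cast; ring1)) hs'
      | linear_combination (norm := (push_cast; ring1)) ht'
      | (push_cast; ring)

lemma XhX (ε : ℝ) (h0 : 0 ≤ ε) (h1 : ε ≤ 1) :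
    (rhoM - sigM ε)ᴴ * (rhoM - sigM ε) =
      Matrix.diagonal ((↑) ∘ fun _ : Fin 2 => (81/100) * ε) := by
  have ht' := sqc (1 - ε) (by linarith)
  have hs' := sqc ε h0
  rw [Xfact ε h0 h1]
  ext i j
  fin_cases i <;> fin_cases j <;>
    simp [Matrix.mul_apply, Fin.sum_univ_two, Matrix.conjTranspose_apply, Matrix.smul_apply,
      Matrix.diagonal, Complex.real_smul, Complex.conj_ofReal, _root_.map_mul, map_inv₀, map_ofNat] <;>
    first
      | linear_combination (norm := (push_cast; ring1))
          ((81/100) * (Real.sqrt (1-ε) : ℂ) * (Real.sqrt (1-ε) : ℂ)) * hs' +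
          ((81/100) * (ε : ℂ)) * ht'
      | (push_cast; ring)

lemma claim1 (ε : ℝ) (h0 : 0 ≤ ε) (h1 : ε ≤ 1) :
    1/2 * traceNorm (rhoM - sigM ε) ≤ Real.sqrt ε := by
  have hsq : Real.sqrt ((81:ℝ)/100 * ε) = 9/10 * Real.sqrt ε := by
    rw [show (81:ℝ)/100 * ε = (9/10 * Real.sqrt ε)^2 by
      rw [mul_pow, Real.sq_sqrt h0]; ring]
    exact Real.sqrt_sq (by positivity)
  have : traceNorm (rhoM - sigM ε) = 9/5 * Real.sqrt ε := by
    unfold traceNorm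
    rw [XhX ε h0 h1, cfcM_diagonal, trR_diagonal]
    simp [Fin.sum_univ_two, Function.comp, hsq]
    ring
  rw [this]
  have := Real.sqrt_nonneg ε
  linarith

lemma claim2 (ε : ℝ) : MLE rhoM ((10 : ℝ) • sigM ε) := by
  show ((10 : ℝ) • sigM ε - rhoM).PosSemidef
  rw [ten_smul]
  exact posSemidef_vecMulVec_star _

lemma mpow_rho : mpow rhoM (1/2) = rhoM := by
  rw [mpow, rho_diag, cfcM_diagonal]
  have : (Complex.ofReal ∘ (fun x : ℝ => x ^ ((1:ℝ)/2)) ∘ ![(1:ℝ), 0])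
      = Complex.ofReal ∘ ![(1:ℝ), 0] := by
    funext i
    fin_cases i <;>
      simp [Real.one_rpow, Real.zero_rpow (by norm_num : (1:ℝ)/2 ≠ 0)]
  rw [this]

lemma sig_det (ε : ℝ) (h0 : 0 ≤ ε) (h1 : ε ≤ 1) :
    (sigM ε).det = ((9 * ε / 100 : ℝ) : ℂ) := by
  have ht' := sqc (1 - ε) (by linarith)
  have hs' := sqc ε h0
  rw [Matrix.det_fin_two]
  simp [sigM, rhoM, psiV, eV, Matrix.vecMulVec_apply, -Matrix.cons_vecMulVec, Matrix.add_apply, Matrix.smul_apply,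
    Complex.real_smul, Complex.conj_ofReal]
  linear_combination (norm := (push_cast; ring1)) ((9/100 : ℂ)) * hs'

lemma sig_inv00 (ε : ℝ) (h0 : 0 < ε) (h1 : ε ≤ 1) :
    (sigM ε)⁻¹ 0 0 = 10 := by
  have hs' := sqc ε h0.le
  have hσ11 : sigM ε 1 1 = ((9/10 * ε : ℝ) : ℂ) := by
    simp [sigM, rhoM, psiV, eV, Matrix.vecMulVec_apply, -Matrix.cons_vecMulVec, Matrix.add_apply, Matrix.smul_apply,
      Complex.real_smul, Complex.conj_ofReal]
    linear_combination (norm := (push_cast; ring1)) hs'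
  have hε : ((ε : ℂ)) ≠ 0 := by exact_mod_cast ne_of_gt h0
  rw [Matrix.inv_def, Matrix.smul_apply, Matrix.adjugate_fin_two, sig_det ε h0.le h1]
  rw [Ring.inverse_eq_inv']
  simp [hσ11]
  push_cast
  field_simp
  ring

lemma rho_inv_rho (ε : ℝ) (h0 : 0 < ε) (h1 : ε ≤ 1) :
    rhoM * (sigM ε)⁻¹ * rhoM = Matrix.diagonal (Complex.ofReal ∘ ![(10 : ℝ), 0]) := by
  have h00 := sig_inv00 ε h0 h1
  ext i j
  fin_cases i <;> fin_cases j <;>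
    simp [rhoM, eV, Matrix.vecMulVec_apply, -Matrix.cons_vecMulVec, Matrix.mul_apply, Fin.sum_univ_two,
      Matrix.diagonal, h00]

lemma claim3 (ε : ℝ) (h0 : 0 < ε) (h1 : ε ≤ 1) :
    geomRel rhoM (sigM ε) = Real.logb 2 10 := by
  unfold geomRel
  rw [mpow_rho, rho_inv_rho ε h0 h1, cfcM_diagonal, rho_diag, Matrix.diagonal_mul_diagonal]
  have : (fun i => (Complex.ofReal ∘ ![(1:ℝ), 0]) i *
        (Complex.ofReal ∘ Real.logb 2 ∘ ![(10:ℝ), 0]) i)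
      = (Complex.ofReal ∘ ![Real.logb 2 10, 0]) := by
    funext i
    fin_cases i <;> simp
  rw [this, trR_diagonal]
  simp [Fin.sum_univ_two]

lemma rho_state : IsState rhoM := by
  constructor
  · exact posSemidef_vecMulVec_star eV
  · simp [trR, rhoM, eV, Matrix.trace, Matrix.diag, Fin.sum_univ_two, Matrix.vecMulVec_apply, -Matrix.cons_vecMulVec]

lemma sig_trace (ε : ℝ) (h0 : 0 ≤ ε) (h1 : ε ≤ 1) : trR (sigM ε) = 1 := by
  have ht' := sqc (1 - ε) (by linarith)
  have hs' := sqc ε h0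
  have : (sigM ε).trace = 1 := by
    simp [Matrix.trace, Matrix.diag, Fin.sum_univ_two, sigM, rhoM, psiV, eV,
      Matrix.vecMulVec_apply, -Matrix.cons_vecMulVec, Matrix.add_apply, Matrix.smul_apply,
      Complex.real_smul, Complex.conj_ofReal]
    linear_combination (norm := (push_cast; ring1)) (9/10 : ℂ) * ht' + (9/10 : ℂ) * hs'
  simp [trR, this]

lemma sig_posdef (ε : ℝ) (h0 : 0 < ε) (h1 : ε ≤ 1) : (sigM ε).PosDef := by
  have ht' := sqc (1 - ε) (by linarith)
  have hs' := sqc ε h0.le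
  rw [Matrix.posDef_iff_dotProduct_mulVec]
  constructor
  · ext i j
    fin_cases i <;> fin_cases j <;>
      simp [sigM, rhoM, psiV, eV, Matrix.vecMulVec_apply, -Matrix.cons_vecMulVec, Matrix.add_apply, Matrix.smul_apply,
        Matrix.conjTranspose_apply, Complex.real_smul, Complex.conj_ofReal, _root_.map_mul,
        map_inv₀, map_ofNat, mul_comm]
  · intro x hx
    set T : ℂ := (Real.sqrt (1 - ε) : ℂ)
    set S : ℂ := (Real.sqrt ε : ℂ)
    have key : star x ⬝ᵥ (sigM ε) *ᵥ x =
        (9/10 : ℂ) * (starRingEnd ℂ (T * x 0 + S * x 1) * (T * x 0 + S * x 1)) +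
        (1/10 : ℂ) * (starRingEnd ℂ (x 0) * (x 0)) := by
      simp [dotProduct, Matrix.mulVec, Fin.sum_univ_two, sigM, rhoM, psiV, eV,
        Matrix.vecMulVec_apply, -Matrix.cons_vecMulVec, Matrix.add_apply, Matrix.smul_apply,
        Complex.real_smul, Complex.conj_ofReal, _root_.map_mul, map_add, T, S]
      push_cast
      ring
    rw [key, Complex.conj_mul', Complex.conj_mul']
    have hr : ((9/10 : ℂ) * ((‖T * x 0 + S * x 1‖ : ℝ) : ℂ)^2 +
        (1/10 : ℂ) * ((‖x 0‖ : ℝ) : ℂ)^2)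
        = (((9/10) * ‖T * x 0 + S * x 1‖^2 + (1/10) * ‖x 0‖^2 : ℝ) : ℂ) := by
      push_cast; ring
    rw [hr, Complex.zero_lt_real]
    rcases eq_or_ne (x 0) 0 with hx0 | hx0
    · have hx1 : x 1 ≠ 0 := by
        intro h
        apply hx
        funext i
        fin_cases i <;> simp [hx0, h]
      have hS : S ≠ 0 := by
        simp only [S, ne_eq, Complex.ofReal_eq_zero]
        exact ne_of_gt (Real.sqrt_pos.2 h0)
      have hc : T * x 0 + S * x 1 ≠ 0 := by
        rw [hx0, mul_zero, zero_add]
        exact mul_ne_zero hS hx1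
      have h1' := norm_pos_iff.mpr hc
      nlinarith [sq_nonneg ‖x 0‖, norm_nonneg (x 0)]
    · have h1' := norm_pos_iff.mpr hx0
      nlinarith [sq_nonneg ‖T * x 0 + S * x 1‖, norm_nonneg (T * x 0 + S * x 1)]

end Aux

set_option maxHeartbeats 1000000

/-- Appendix B: no continuity bound of the form `D-hat(ρ‖σ) ≤ f(ε,d)` with
`f(ε,d) → 0` as `ε → 0` can hold; witnessed by the explicit qubit example. -/
theorem no_geomRel_continuity_bound :
    (∀ ε : ℝ, ε ∈ Set.Ioo (0:ℝ) 1 →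
      (1/2 * traceNorm
          (Matrix.vecMulVec (![1, 0] : Fin 2 → ℂ) (star (![1, 0] : Fin 2 → ℂ)) -
            ((9/10 : ℝ) • Matrix.vecMulVec
                (![(Real.sqrt (1 - ε) : ℂ), (Real.sqrt ε : ℂ)])
                (star ![(Real.sqrt (1 - ε) : ℂ), (Real.sqrt ε : ℂ)]) +
              (1/10 : ℝ) • Matrix.vecMulVec (![1, 0] : Fin 2 → ℂ)
                (star (![1, 0] : Fin 2 → ℂ)))) ≤ Real.sqrt ε) ∧
      MLE (Matrix.vecMulVec (![1, 0] : Fin 2 → ℂ) (star (![1, 0] : Fin 2 → ℂ)))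
        ((10 : ℝ) •
          ((9/10 : ℝ) • Matrix.vecMulVec
              (![(Real.sqrt (1 - ε) : ℂ), (Real.sqrt ε : ℂ)])
              (star ![(Real.sqrt (1 - ε) : ℂ), (Real.sqrt ε : ℂ)]) +
            (1/10 : ℝ) • Matrix.vecMulVec (![1, 0] : Fin 2 → ℂ)
              (star (![1, 0] : Fin 2 → ℂ)))) ∧
      geomRel (Matrix.vecMulVec (![1, 0] : Fin 2 → ℂ) (star (![1, 0] : Fin 2 → ℂ)))
          ((9/10 : ℝ) • Matrix.vecMulVec
              (![(Real.sqrt (1 - ε) : ℂ), (Real.sqrt ε : ℂ)])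
              (star ![(Real.sqrt (1 - ε) : ℂ), (Real.sqrt ε : ℂ)]) +
            (1/10 : ℝ) • Matrix.vecMulVec (![1, 0] : Fin 2 → ℂ)
              (star (![1, 0] : Fin 2 → ℂ))) = Real.logb 2 10) ∧
    ¬ ∃ f : ℝ → ℝ → ℝ,
      (∀ dd : ℝ, Filter.Tendsto (fun ε => f ε dd)
        (nhdsWithin 0 (Set.Ioi 0)) (nhds 0)) ∧
      (∀ (ε dd : ℝ) (ρ σ : Matrix (Fin 2) (Fin 2) ℂ), IsState ρ → IsState σ →
        σ.PosDef → 1 ≤ dd → 1/2 * traceNorm (ρ - σ) ≤ ε →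
        MLE ρ ((2:ℝ) ^ dd • σ) → geomRel ρ σ ≤ f ε dd) := by
  constructor
  · intro ε hε
    exact ⟨claim1 ε hε.1.le hε.2.le, claim2 ε, claim3 ε hε.1 hε.2.le⟩
  · rintro ⟨f, htend, hbound⟩
    set dd := Real.logb 2 10 with hdd
    have hdd1 : (1:ℝ) ≤ dd := by
      rw [hdd, show (1:ℝ) = Real.logb 2 2 from
        (Real.logb_self_eq_one (by norm_num)).symm]
      exact Real.logb_le_logb_of_le (by norm_num) (by norm_num) (by norm_num)
    have hpow : (2:ℝ) ^ dd = 10 := Real.rpow_logb (by norm_num) (by norm_num) (by norm_num)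
    have hev : ∀ᶠ δ in nhdsWithin 0 (Set.Ioi 0), f δ dd < 1 :=
      (htend dd).eventually (gt_mem_nhds (show (0:ℝ) < 1 by norm_num))
    have hev2 : ∀ᶠ δ in nhdsWithin (0:ℝ) (Set.Ioi 0), δ < 1 :=
      Filter.Eventually.filter_mono nhdsWithin_le_nhds
        (gt_mem_nhds (show (0:ℝ) < 1 by norm_num))
    have hev3 : ∀ᶠ δ in nhdsWithin (0:ℝ) (Set.Ioi 0), δ ∈ Set.Ioi (0:ℝ) :=
      eventually_mem_nhdsWithin
    obtain ⟨δ, h3, h2, hδ0⟩ := (hev.and (hev2.and hev3)).exists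
    have hδ0' : (0:ℝ) < δ := hδ0
    have hδ1 : (0:ℝ) < δ^2 := by positivity
    have hδ2 : δ^2 ≤ 1 := by nlinarith
    have hsqrt : Real.sqrt (δ^2) = δ := Real.sqrt_sq hδ0'.le
    have c1 := claim1 (δ^2) hδ1.le hδ2
    have c3 := claim3 (δ^2) hδ1 hδ2
    have hb := hbound δ dd rhoM (sigM (δ^2)) rho_state
      ⟨(sig_posdef _ hδ1 hδ2).posSemidef, sig_trace _ hδ1.le hδ2⟩
      (sig_posdef _ hδ1 hδ2) hdd1
      (c1.trans hsqrt.le)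
      (by rw [hpow]; exact claim2 (δ^2))
    rw [c3] at hb
    linarith

end
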